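/- arXiv:1401.6461 — 3 statements merged into one kernel-verified Lean document; each statement's English description precedes it below -/
import Mathlib

section
/- Let F(x, y) be a polynomial with rational coefficients in two variables of total degree d. Then there exist polynomials K_0, K_1, ..., K_{⌊(d+1)/2⌋} with rational coefficients, each of degree at most d + 1, such that for every integer n ≥ d + 2 one has ∑_{j+k=n, j,k≥1} F(j, k) * ζ(2j) * ζ(2k) = ∑_{k=0}^{⌊(d+1)/2⌋} K_k(n) * ζ(2k) * ζ(2n-2k). -/
open PowerSeries Finset Finset.Nat

namespace WSZ

noncomputable def bb (n : ℕ) : ℚ := bernoulli n / (Nat.factorial n)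

noncomputable def th (f : PowerSeries ℚ) : PowerSeries ℚ :=
  PowerSeries.mk fun n => (n : ℚ) * PowerSeries.coeff n f

@[simp] lemma coeff_th (f : PowerSeries ℚ) (n : ℕ) :
    PowerSeries.coeff n (th f) = n * PowerSeries.coeff n f := coeff_mk _ _

lemma th_add (f g : PowerSeries ℚ) : th (f + g) = th f + th g := by
  ext n; simp [mul_add]

lemma th_smul (a : ℚ) (f : PowerSeries ℚ) : th (a • f) = a • th f := by
  ext n; simp; ring

lemma th_mul (f g : PowerSeries ℚ) : th (f * g) = th f * g + f * th g := by
  ext n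
  simp only [coeff_th, coeff_mul, map_add, Finset.mul_sum]
  rw [← Finset.sum_add_distrib]
  refine Finset.sum_congr rfl fun p hp => ?_
  rw [Finset.HasAntidiagonal.mem_antidiagonal] at hp
  rw [← hp]
  push_cast
  ring

lemma th_X : th (X : PowerSeries ℚ) = X := by
  ext n
  simp only [coeff_th, coeff_X]
  rcases eq_or_ne n 1 with rfl | h
  · simp
  · simp [h]

lemma th_exp_sub_one : th (exp ℚ - 1) = X * exp ℚ := by
  ext n
  cases n with
  | zero => simp
  | succ m =>
      rw [coeff_succ_X_mul]
      simp only [coeff_th, map_sub, coeff_exp, coeff_one, Nat.succ_ne_zero, if_false,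
        sub_zero, Algebra.algebraMap_self_apply]
      rw [Nat.factorial_succ]
      have h1 : ((Nat.factorial m : ℕ) : ℚ) ≠ 0 := Nat.cast_ne_zero.mpr (Nat.factorial_ne_zero m)
      field_simp
      push_cast; ring

lemma B_rel : th (bernoulliPowerSeries ℚ) + bernoulliPowerSeries ℚ * bernoulliPowerSeries ℚ
    + X * bernoulliPowerSeries ℚ = bernoulliPowerSeries ℚ := by
  set B := bernoulliPowerSeries ℚ with hB
  have h1 : B * (exp ℚ - 1) = X := bernoulliPowerSeries_mul_exp_sub_one ℚ
  have h2 : th B * (exp ℚ - 1) + B * (X * exp ℚ) = X := by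
    rw [← th_exp_sub_one, ← th_mul, h1, th_X]
  have h3 : (th B * (exp ℚ - 1) + B * (X * exp ℚ)) * B = X * B := by rw [h2]
  have e1 : th B * (exp ℚ - 1) * B = X * th B := by
    rw [mul_assoc, mul_comm (exp ℚ - 1) B, h1]; ring
  have e2 : B * (X * exp ℚ) * B = X * (X * B + B * B) := by
    have hbe : B * B * exp ℚ = X * B + B * B := by
      have : B * B * (exp ℚ - 1) = B * X := by rw [mul_assoc, h1]
      linear_combination this
    calc B * (X * exp ℚ) * B = X * (B * B * exp ℚ) := by ring
      _ = X * (X * B + B * B) := by rw [hbe]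
  rw [add_mul, e1, e2] at h3
  have h4 : X * (th B + B * B + X * B) = X * B := by linear_combination h3
  exact mul_left_cancel₀ PowerSeries.X_ne_zero h4

lemma coeff_B (n : ℕ) : coeff n (bernoulliPowerSeries ℚ) = bb n := by
  simp [bernoulliPowerSeries, bb, coeff_mk]

lemma bb_zero : bb 0 = 1 := by simp [bb]

lemma bb_odd {m : ℕ} (h : Odd m) (h1 : 1 < m) : bb m = 0 := by
  rw [bb, bernoulli_eq_bernoulli'_of_ne_one (by omega), bernoulli'_eq_zero_of_odd h h1]
  simp

lemma bb_conv (n : ℕ) :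
    ∑ i ∈ range (n + 2), bb i * bb (n + 1 - i) = (1 - ((n : ℚ) + 1)) * bb (n + 1) - bb n := by
  have h := congrArg (coeff (n + 1)) B_rel
  rw [map_add, map_add, coeff_succ_X_mul] at h
  simp only [coeff_th, coeff_mul, coeff_B, Nat.succ_eq_add_one] at h
  rw [Finset.Nat.sum_antidiagonal_eq_sum_range_succ_mk] at h
  push_cast at h ⊢
  linear_combination h

lemma sum_even_odd (f : ℕ → ℚ) (n : ℕ) :
    ∑ i ∈ range (2 * n + 1), f i
      = ∑ j ∈ range (n + 1), f (2 * j) + ∑ j ∈ range n, f (2 * j + 1) := by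
  induction n with
  | zero => simp
  | succ m ih =>
      have h1 : 2 * (m + 1) + 1 = (2 * m + 1) + 1 + 1 := by ring
      rw [h1, sum_range_succ, sum_range_succ, ih, sum_range_succ (fun j => f (2 * j)) (m + 1),
        sum_range_succ (fun j => f (2 * j + 1)) m]
      have e1 : 2 * m + 1 + 1 = 2 * (m + 1) := by ring
      have e2 : 2 * m + 1 = 2 * m + 1 := rfl
      rw [e1]
      ring

lemma bb_even_conv (n : ℕ) (hn : 2 ≤ n) :
    ∑ j ∈ range (n + 1), bb (2 * j) * bb (2 * n - 2 * j) = (1 - 2 * (n : ℚ)) * bb (2 * n) := by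
  obtain ⟨m, rfl⟩ : ∃ m, n = m + 2 := ⟨n - 2, by omega⟩
  have h := bb_conv (2 * m + 3)
  have hodd : bb (2 * m + 3) = 0 := bb_odd ⟨m + 1, by ring⟩ (by omega)
  have hrange : 2 * m + 3 + 2 = 2 * (m + 2) + 1 := by ring
  rw [hrange] at h
  rw [sum_even_odd (fun i => bb i * bb (2 * m + 3 + 1 - i)) (m + 2)] at h
  have hzero : ∑ j ∈ range (m + 2), bb (2 * j + 1) * bb (2 * m + 3 + 1 - (2 * j + 1)) = 0 := by
    refine Finset.sum_eq_zero fun j hj => ?_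
    rcases Nat.eq_zero_or_pos j with rfl | hpos
    · have : 2 * m + 3 + 1 - (2 * 0 + 1) = 2 * m + 3 := by omega
      rw [this, hodd]; ring
    · rw [bb_odd ⟨j, by ring⟩ (by omega)]; ring
  rw [hzero, add_zero, hodd] at h
  have hsum : ∀ j ∈ range (m + 2 + 1),
      bb (2 * j) * bb (2 * m + 3 + 1 - 2 * j) = bb (2 * j) * bb (2 * (m + 2) - 2 * j) := by
    intro j hj
    have e : 2 * m + 3 + 1 - 2 * j = 2 * (m + 2) - 2 * j := by omega
    rw [e]
  rw [Finset.sum_congr rfl hsum] at h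
  rw [h]
  push_cast
  ring_nf

noncomputable def q (m : ℕ) : ℚ :=
  (-1) ^ (m + 1) * 2 ^ (2 * m) * bernoulli (2 * m) / (2 * (Nat.factorial (2 * m)))

lemma q_eq (m : ℕ) : q m = (-1) ^ (m + 1) * 2 ^ (2 * m) / 2 * bb (2 * m) := by
  have h1 : ((Nat.factorial (2 * m) : ℕ) : ℚ) ≠ 0 :=
    Nat.cast_ne_zero.mpr (Nat.factorial_ne_zero _)
  rw [q, bb]
  field_simp

lemma q_mul_q (j k : ℕ) :
    q j * q k = (-1) ^ (j + k) * 2 ^ (2 * (j + k)) / 4 * (bb (2 * j) * bb (2 * k)) := by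
  rw [q_eq, q_eq]
  rw [show j + 1 = j + 1 from rfl]
  rw [pow_add ((-1 : ℚ)) j 1, pow_add ((-1 : ℚ)) k 1, pow_add ((-1 : ℚ)) j k,
    show 2 * (j + k) = 2 * j + 2 * k from by ring, pow_add (2 : ℚ)]
  ring

lemma euler (n : ℕ) (hn : 2 ≤ n) :
    ∑ j ∈ Icc 1 (n - 1), q j * q (n - j) = ((n : ℚ) + 1 / 2) * q n := by
  have hset : range (n + 1) = insert 0 (insert n (Icc 1 (n - 1))) := by
    ext i; simp only [mem_range, mem_insert, mem_Icc]; omega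
  have h := bb_even_conv n hn
  rw [hset, Finset.sum_insert (by simp only [mem_insert, mem_Icc]; omega),
    Finset.sum_insert (by simp only [mem_Icc]; omega)] at h
  have h0 : bb (2 * 0) * bb (2 * n - 2 * 0) = bb (2 * n) := by
    norm_num [bb_zero]
  have hn' : bb (2 * n) * bb (2 * n - 2 * n) = bb (2 * n) := by
    simp [bb_zero]
  rw [h0] at h
  rw [show 2 * n - 2 * n = 0 from by omega, bb_zero, mul_one] at h
  -- h : bb (2*n) + (bb (2*n) + ∑ j ∈ Icc 1 (n-1), bb (2*j) * bb (2*n-2*j)) = (1-2n) bb (2n)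
  have hmain : ∑ j ∈ Icc 1 (n - 1), bb (2 * j) * bb (2 * n - 2 * j)
      = -(2 * (n : ℚ) + 1) * bb (2 * n) := by linear_combination h
  have hterm : ∀ j ∈ Icc 1 (n - 1), q j * q (n - j)
      = (-1 : ℚ) ^ n * 2 ^ (2 * n) / 4 * (bb (2 * j) * bb (2 * n - 2 * j)) := by
    intro j hj
    rw [mem_Icc] at hj
    rw [q_mul_q]
    have e1 : j + (n - j) = n := by omega
    have e2 : 2 * (n - j) = 2 * n - 2 * j := by omega
    rw [e1, e2]
  rw [Finset.sum_congr rfl hterm, ← Finset.mul_sum, hmain, q_eq]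
  rw [pow_add ((-1 : ℚ)) n 1]
  ring

lemma smulC (a : ℚ) (f : PowerSeries ℚ) : a • f = PowerSeries.C a * f := by
  ext n; simp

lemma th_zero : th 0 = 0 := by ext n; simp

lemma th_Xpow (m : ℕ) : th ((X : PowerSeries ℚ) ^ m) = PowerSeries.C (m : ℚ) * X ^ m := by
  ext n
  simp only [coeff_th, coeff_C_mul, coeff_X_pow]
  rcases eq_or_ne n m with rfl | h
  · simp
  · simp [h]

lemma th_pow (f : PowerSeries ℚ) (r : ℕ) :
    th (f ^ (r + 1)) = PowerSeries.C ((r : ℚ) + 1) * (f ^ r * th f) := by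
  induction r with
  | zero => simp
  | succ s ih =>
      rw [pow_succ, th_mul, ih]
      have hC : PowerSeries.C (((s + 1 : ℕ) : ℚ) + 1) = PowerSeries.C ((s : ℚ) + 1) + 1 := by
        rw [show ((s + 1 : ℕ) : ℚ) + 1 = ((s : ℚ) + 1) + 1 from by push_cast; ring, map_add,
          map_one]
      rw [hC]
      ring

noncomputable def G : PowerSeries ℚ := PowerSeries.mk fun m => if m = 0 then 0 else q m

@[simp] lemma coeff_G (m : ℕ) : coeff m G = if m = 0 then 0 else q m := coeff_mk _ _

@[simp] lemma constG : constantCoeff G = 0 := by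
  rw [← coeff_zero_eq_constantCoeff_apply]; simp

lemma conv_zero (f g : PowerSeries ℚ) (hf : coeff 0 f = 0) (hg : coeff 0 g = 0)
    (n : ℕ) (hn : 1 ≤ n) :
    coeff n (f * g) = ∑ j ∈ Icc 1 (n - 1), coeff j f * coeff (n - j) g := by
  rw [coeff_mul, Finset.Nat.sum_antidiagonal_eq_sum_range_succ_mk]
  refine (Finset.sum_subset ?_ ?_).symm
  · intro j hj; rw [mem_Icc] at hj; rw [mem_range]; omega
  · intro j hj hnot
    rw [mem_range] at hj; rw [mem_Icc] at hnot
    have : j = 0 ∨ j = n := by omega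
    rcases this with rfl | rfl
    · rw [hf, zero_mul]
    · rw [Nat.sub_self, hg, mul_zero]

lemma q_one : q 1 = 1 / 6 := by
  have : bernoulli 2 = 1 / 6 := by
    rw [bernoulli_eq_bernoulli'_of_ne_one (by norm_num), bernoulli'_two]
  norm_num [q, this, Nat.factorial]

lemma hR : th G = G ^ 2 - PowerSeries.C (1 / 2) * G + PowerSeries.C (1 / 4) * X := by
  ext n
  simp only [map_add, map_sub, coeff_th, coeff_C_mul, sq]
  rcases Nat.lt_or_ge n 2 with h2 | h2
  · interval_cases n
    · simp
    · rw [conv_zero G G (by simp) (by simp) 1 le_rfl]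
      simp [q_one]
      norm_num
  · rw [conv_zero G G (by simp) (by simp) n (by omega)]
    have hsum : ∀ j ∈ Icc 1 (n - 1), coeff j G * coeff (n - j) G = q j * q (n - j) := by
      intro j hj
      rw [mem_Icc] at hj
      rw [coeff_G, coeff_G, if_neg (by omega), if_neg (by omega)]
    rw [Finset.sum_congr rfl hsum, euler n h2, coeff_G, if_neg (by omega),
      coeff_X, if_neg (by omega)]
    ring

noncomputable def NN (w : ℕ) : Submodule ℚ (PowerSeries ℚ) :=
  Submodule.span ℚ
    ({h | ∃ c i, 2 * c + i + 1 ≤ w ∧ h = X ^ c * th^[i] G} ∪ {h | ∃ m, 2 * m ≤ w ∧ h = X ^ m})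

lemma NN_mono {w w' : ℕ} (h : w ≤ w') : NN w ≤ NN w' := by
  apply Submodule.span_mono
  rintro x (⟨c, i, hle, rfl⟩ | ⟨m, hle, rfl⟩)
  · exact Or.inl ⟨c, i, le_trans hle h, rfl⟩
  · exact Or.inr ⟨m, le_trans hle h, rfl⟩

lemma gen_mem {w c i : ℕ} (h : 2 * c + i + 1 ≤ w) : X ^ c * th^[i] G ∈ NN w :=
  Submodule.subset_span (Or.inl ⟨c, i, h, rfl⟩)

lemma Xpow_mem {w m : ℕ} (h : 2 * m ≤ w) : (X : PowerSeries ℚ) ^ m ∈ NN w :=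
  Submodule.subset_span (Or.inr ⟨m, h, rfl⟩)

lemma thG_mem {w i : ℕ} (h : i + 1 ≤ w) : th^[i] G ∈ NN w := by
  have := gen_mem (w := w) (c := 0) (i := i) (by omega)
  rwa [pow_zero, one_mul] at this

lemma G_mem {w : ℕ} (h : 1 ≤ w) : G ∈ NN w := thG_mem (i := 0) h

lemma C_mul_mem {w : ℕ} {f : PowerSeries ℚ} (a : ℚ) (hf : f ∈ NN w) :
    PowerSeries.C a * f ∈ NN w := by
  rw [← smulC]; exact Submodule.smul_mem _ _ hf

lemma th_mem {w : ℕ} {f : PowerSeries ℚ} (hf : f ∈ NN w) : th f ∈ NN (w + 1) := by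
  refine Submodule.span_induction (p := fun x _ => th x ∈ NN (w + 1)) ?_ ?_ ?_ ?_ hf
  · rintro x (⟨c, i, hle, rfl⟩ | ⟨m, hle, rfl⟩)
    · have e : th (X ^ c * th^[i] G) = PowerSeries.C (c : ℚ) * (X ^ c * th^[i] G)
          + X ^ c * th^[i + 1] G := by
        rw [th_mul, th_Xpow, Function.iterate_succ_apply', mul_assoc]
      rw [e]
      exact Submodule.add_mem _ (C_mul_mem _ (gen_mem (by omega))) (gen_mem (by omega))
    · rw [th_Xpow]
      exact C_mul_mem _ (Xpow_mem (by omega))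
  · show th 0 ∈ NN (w + 1)
    rw [th_zero]; exact Submodule.zero_mem _
  · intro x y _ _ ihx ihy; rw [th_add]; exact Submodule.add_mem _ ihx ihy
  · intro a x _ ihx; rw [th_smul]; exact Submodule.smul_mem _ _ ihx

lemma X_mul_mem {w : ℕ} {f : PowerSeries ℚ} (hf : f ∈ NN w) : X * f ∈ NN (w + 2) := by
  refine Submodule.span_induction (p := fun x _ => X * x ∈ NN (w + 2)) ?_ ?_ ?_ ?_ hf
  · rintro x (⟨c, i, hle, rfl⟩ | ⟨m, hle, rfl⟩)
    · have e : X * (X ^ c * th^[i] G) = X ^ (c + 1) * th^[i] G := by ring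
      rw [e]; exact gen_mem (by omega)
    · have e : X * (X : PowerSeries ℚ) ^ m = X ^ (m + 1) := by ring
      rw [e]; exact Xpow_mem (by omega)
  · show X * 0 ∈ NN (w + 2)
    rw [mul_zero]; exact Submodule.zero_mem _
  · intro x y _ _ ihx ihy; rw [mul_add]; exact Submodule.add_mem _ ihx ihy
  · intro a x _ ihx; rw [mul_smul_comm]; exact Submodule.smul_mem _ _ ihx

lemma Xpow_mul_mem (m : ℕ) {w : ℕ} {f : PowerSeries ℚ} (hf : f ∈ NN w) :
    X ^ m * f ∈ NN (w + 2 * m) := by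
  induction m with
  | zero => simpa using hf
  | succ k ih =>
      have e : X ^ (k + 1) * f = X * (X ^ k * f) := by ring
      have := X_mul_mem ih
      rw [show w + 2 * k + 2 = w + 2 * (k + 1) from by ring] at this
      rw [e]; exact this

lemma G_sq : G ^ 2 = th G + PowerSeries.C (1 / 2) * G - PowerSeries.C (1 / 4) * X := by
  linear_combination -hR

lemma G_pow_mem : ∀ r : ℕ, G ^ (r + 1) ∈ NN (r + 1) ∧ G ^ (r + 2) ∈ NN (r + 2) := by
  have h1 : G ^ 1 ∈ NN 1 := by rw [pow_one]; exact G_mem le_rfl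
  have h2 : G ^ 2 ∈ NN 2 := by
    rw [G_sq]
    refine Submodule.sub_mem _ (Submodule.add_mem _ (thG_mem (i := 1) le_rfl) ?_) ?_
    · exact C_mul_mem _ (G_mem (by omega))
    · have := Xpow_mem (w := 2) (m := 1) (by omega)
      rw [pow_one] at this
      exact C_mul_mem _ this
  intro r
  induction r with
  | zero => exact ⟨h1, h2⟩
  | succ s ih =>
      refine ⟨ih.2, ?_⟩
      have hp := th_pow G (s + 1)
      push_cast at hp
      rw [show s + 1 + 1 = s + 2 from rfl] at hp
      have hCC : PowerSeries.C (1 / ((s : ℚ) + 2)) * PowerSeries.C ((s : ℚ) + 1 + 1) = 1 := by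
        rw [← map_mul]
        rw [show (1 / ((s : ℚ) + 2)) * ((s : ℚ) + 1 + 1) = 1 from by
          rw [show ((s : ℚ) + 1 + 1) = ((s : ℚ) + 2) from by ring]
          field_simp]
        exact map_one _
      have key : G ^ (s + 3) = PowerSeries.C (1 / ((s : ℚ) + 2)) * th (G ^ (s + 2))
          + PowerSeries.C (1 / 2) * G ^ (s + 2)
          - PowerSeries.C (1 / 4) * (X * G ^ (s + 1)) := by
        linear_combination (-(G ^ (s + 1))) * hR - PowerSeries.C (1 / ((s : ℚ) + 2)) * hp
          - (G ^ (s + 1) * th G) * hCC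
      rw [show s + 1 + 2 = s + 3 from rfl, key]
      refine Submodule.sub_mem _ (Submodule.add_mem _ ?_ ?_) ?_
      · exact C_mul_mem _ (th_mem ih.2)
      · exact C_mul_mem _ (NN_mono (by omega) ih.2)
      · exact C_mul_mem _ (NN_mono (by omega) (X_mul_mem ih.1))

lemma B_mem : ∀ i r : ℕ, G ^ r * th^[i] G ∈ NN (r + i + 1) := by
  intro i
  induction i with
  | zero =>
      intro r
      simp only [Function.iterate_zero_apply]
      rw [← pow_succ]
      rcases Nat.eq_zero_or_pos r with rfl | hr
      · simpa using G_mem (by omega)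
      · obtain ⟨t, rfl⟩ : ∃ t, r = t + 1 := ⟨r - 1, by omega⟩
        have := (G_pow_mem t).2
        rw [show t + 1 + 0 + 1 = t + 2 from by omega]
        exact this
  | succ i ih =>
      intro r
      rcases Nat.eq_zero_or_pos r with rfl | hr
      · rw [pow_zero, one_mul, show 0 + (i + 1) + 1 = i + 2 from by omega]
        exact thG_mem (by omega)
      · obtain ⟨s, rfl⟩ : ∃ s, r = s + 1 := ⟨r - 1, by omega⟩
        have e4 : th^[i + 1] G = th (th^[i] G) := Function.iterate_succ_apply' th i G
        have e1 := th_mul (G ^ (s + 1)) (th^[i] G)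
        have e2 := th_pow G s
        have k1 : G ^ (s + 1) * th^[i + 1] G = th (G ^ (s + 1) * th^[i] G)
            - PowerSeries.C ((s : ℚ) + 1) * (G ^ s * (th G * th^[i] G)) := by
          rw [e4]
          linear_combination -e1 - th^[i] G * e2
        have k2 : G ^ s * (th G * th^[i] G) = G ^ (s + 2) * th^[i] G
            - PowerSeries.C (1 / 2) * (G ^ (s + 1) * th^[i] G)
            + PowerSeries.C (1 / 4) * (X * (G ^ s * th^[i] G)) := by
          linear_combination (G ^ s * th^[i] G) * hR
        rw [k1, k2]
        have m1 : th (G ^ (s + 1) * th^[i] G) ∈ NN (s + 1 + (i + 1) + 1) := by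
          have := th_mem (ih (s + 1))
          rwa [show s + 1 + i + 1 + 1 = s + 1 + (i + 1) + 1 from by omega] at this
        have m2 : G ^ (s + 2) * th^[i] G ∈ NN (s + 1 + (i + 1) + 1) := by
          have := ih (s + 2)
          rwa [show s + 2 + i + 1 = s + 1 + (i + 1) + 1 from by omega] at this
        have m3 : G ^ (s + 1) * th^[i] G ∈ NN (s + 1 + (i + 1) + 1) :=
          NN_mono (by omega) (ih (s + 1))
        have m4 : X * (G ^ s * th^[i] G) ∈ NN (s + 1 + (i + 1) + 1) := by
          have := X_mul_mem (ih s)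
          exact NN_mono (by omega) this
        exact Submodule.sub_mem _ m1
          (C_mul_mem _ (Submodule.add_mem _ (Submodule.sub_mem _ m2 (C_mul_mem _ m3))
            (C_mul_mem _ m4)))

noncomputable def MM (w : ℕ) : Submodule ℚ (PowerSeries ℚ) :=
  Submodule.span ℚ {h | ∃ m j, 2 * m + j ≤ w ∧ h = X ^ m * G ^ j}

lemma MM_gen {w m j : ℕ} (h : 2 * m + j ≤ w) : X ^ m * G ^ j ∈ MM w :=
  Submodule.subset_span ⟨m, j, h, rfl⟩

lemma MM_C_mul {w : ℕ} {f : PowerSeries ℚ} (a : ℚ) (hf : f ∈ MM w) :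
    PowerSeries.C a * f ∈ MM w := by
  rw [← smulC]; exact Submodule.smul_mem _ _ hf

lemma th_MM {w : ℕ} {f : PowerSeries ℚ} (hf : f ∈ MM w) : th f ∈ MM (w + 1) := by
  refine Submodule.span_induction (p := fun x _ => th x ∈ MM (w + 1)) ?_ ?_ ?_ ?_ hf
  · rintro x ⟨m, j, hle, rfl⟩
    rcases Nat.eq_zero_or_pos j with rfl | hj
    · rw [pow_zero, mul_one, th_Xpow]
      have h0 := MM_gen (w := w + 1) (m := m) (j := 0) (by omega)
      rw [pow_zero, mul_one] at h0
      exact MM_C_mul _ h0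
    · obtain ⟨t, rfl⟩ : ∃ t, j = t + 1 := ⟨j - 1, by omega⟩
      have e1 := th_mul (X ^ m) (G ^ (t + 1))
      have e2 := th_Xpow m
      have e3 := th_pow G t
      have key : th (X ^ m * G ^ (t + 1)) =
          PowerSeries.C (m : ℚ) * (X ^ m * G ^ (t + 1))
          + PowerSeries.C ((t : ℚ) + 1) * (X ^ m * G ^ (t + 2)
            - PowerSeries.C (1 / 2) * (X ^ m * G ^ (t + 1))
            + PowerSeries.C (1 / 4) * (X ^ (m + 1) * G ^ t)) := by
        linear_combination e1 + G ^ (t + 1) * e2 + X ^ m * e3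
          + (PowerSeries.C ((t : ℚ) + 1) * X ^ m * G ^ t) * hR
      rw [key]
      refine Submodule.add_mem _ (MM_C_mul _ (MM_gen (by omega))) (MM_C_mul _ ?_)
      refine Submodule.add_mem _ (Submodule.sub_mem _ (MM_gen (by omega))
        (MM_C_mul _ (MM_gen (by omega)))) (MM_C_mul _ (MM_gen (by omega)))
  · show th 0 ∈ MM (w + 1)
    rw [th_zero]; exact Submodule.zero_mem _
  · intro x y _ _ ihx ihy; rw [th_add]; exact Submodule.add_mem _ ihx ihy
  · intro a x _ ihx; rw [th_smul]; exact Submodule.smul_mem _ _ ihx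

lemma thG_MM : ∀ a : ℕ, th^[a] G ∈ MM (a + 1) := by
  intro a
  induction a with
  | zero =>
      have := MM_gen (w := 1) (m := 0) (j := 1) (by omega)
      rwa [pow_zero, one_mul, pow_one] at this
  | succ t ih =>
      rw [Function.iterate_succ_apply']
      exact th_MM ih

lemma prod_mem (a b : ℕ) : th^[a] G * th^[b] G ∈ NN (a + b + 2) := by
  refine Submodule.span_induction (p := fun f _ => f * th^[b] G ∈ NN (a + b + 2)) ?_ ?_ ?_ ?_
    (thG_MM a)
  · rintro x ⟨m, j, hle, rfl⟩
    have e : X ^ m * G ^ j * th^[b] G = X ^ m * (G ^ j * th^[b] G) := by ring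
    rw [e]
    have h1 := Xpow_mul_mem m (B_mem b j)
    exact NN_mono (by omega) h1
  · show (0 : PowerSeries ℚ) * th^[b] G ∈ NN (a + b + 2)
    rw [zero_mul]; exact Submodule.zero_mem _
  · intro x y _ _ ihx ihy
    show (x + y) * th^[b] G ∈ NN (a + b + 2)
    rw [add_mul]; exact Submodule.add_mem _ ihx ihy
  · intro r x _ ihx
    show (r • x) * th^[b] G ∈ NN (a + b + 2)
    rw [smul_mul_assoc]; exact Submodule.smul_mem _ _ ihx

lemma q_zero : q 0 = -(1 / 2) := by
  norm_num [q, Nat.factorial]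

lemma zeta_q {m : ℕ} (hm : m ≠ 0) :
    riemannZeta ((2 * m : ℕ) : ℂ) = ((q m : ℚ) : ℂ) * (Real.pi : ℂ) ^ (2 * m) := by
  have h := riemannZeta_two_mul_nat (k := m) hm
  rw [show ((2 * m : ℕ) : ℂ) = 2 * (m : ℂ) from by push_cast; ring, h, q]
  have hf : (((2 * m).factorial : ℕ) : ℂ) ≠ 0 := Nat.cast_ne_zero.mpr (Nat.factorial_ne_zero _)
  have h2 : (2 : ℂ) ^ (2 * m) = 2 ^ (2 * m - 1) * 2 := by
    rw [← pow_succ, show 2 * m - 1 + 1 = 2 * m from by omega]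
  push_cast
  rw [h2]
  field_simp

lemma q_ne_zero (c : ℕ) : q c ≠ 0 := by
  rcases Nat.eq_zero_or_pos c with rfl | hc
  · rw [q_zero]; norm_num
  · intro h
    have hz := zeta_q (m := c) (by omega)
    rw [h] at hz
    simp only [Rat.cast_zero, zero_mul] at hz
    have hre : (1 : ℝ) < (((2 * c : ℕ) : ℂ)).re := by
      rw [Complex.natCast_re]
      have h2 : (2 : ℕ) ≤ 2 * c := by omega
      have : (2 : ℝ) ≤ ((2 * c : ℕ) : ℝ) := by exact_mod_cast h2
      linarith
    exact riemannZeta_ne_zero_of_one_lt_re hre hz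

lemma coeff_th_iter (i n : ℕ) :
    coeff n (th^[i] G) = (n : ℚ) ^ i * coeff n G := by
  induction i with
  | zero => simp
  | succ t ih =>
      rw [Function.iterate_succ_apply', coeff_th, ih, pow_succ]
      ring

lemma extract (d : ℕ) {f : PowerSeries ℚ} (hf : f ∈ NN (d + 2)) :
    ∃ K : ℕ → Polynomial ℚ, (∀ k, (K k).natDegree ≤ d + 1) ∧
      ∀ n : ℕ, d + 2 ≤ n → coeff n f
        = ∑ k ∈ range ((d + 1) / 2 + 1), (K k).eval (n : ℚ) * (q k * q (n - k)) := by
  refine Submodule.span_induction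
    (p := fun x _ => ∃ K : ℕ → Polynomial ℚ, (∀ k, (K k).natDegree ≤ d + 1) ∧
      ∀ n : ℕ, d + 2 ≤ n → coeff n x
        = ∑ k ∈ range ((d + 1) / 2 + 1), (K k).eval (n : ℚ) * (q k * q (n - k)))
    ?_ ?_ ?_ ?_ hf
  · rintro x (⟨c, i, hle, rfl⟩ | ⟨m, hle, rfl⟩)
    · refine ⟨fun k => if k = c then Polynomial.C (q c)⁻¹
        * (Polynomial.X - Polynomial.C (c : ℚ)) ^ i else 0, fun k => ?_, fun n hn => ?_⟩
      · dsimp only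
        split
        · refine le_trans (Polynomial.natDegree_C_mul_le _ _) ?_
          refine le_trans Polynomial.natDegree_pow_le ?_
          rw [Polynomial.natDegree_X_sub_C]
          omega
        · simp
      · have hcn : c + 1 ≤ n := by omega
        obtain ⟨e, rfl⟩ : ∃ e, n = e + c := ⟨n - c, by omega⟩
        have he : 1 ≤ e := by omega
        rw [coeff_X_pow_mul, coeff_th_iter, coeff_G, if_neg (by omega)]
        rw [Finset.sum_eq_single_of_mem c (by rw [mem_range]; omega)
          (fun k _ hk => by dsimp only; rw [if_neg hk]; simp)]
        dsimp only
        rw [if_pos rfl, Polynomial.eval_mul, Polynomial.eval_C, Polynomial.eval_pow,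
          Polynomial.eval_sub, Polynomial.eval_X, Polynomial.eval_C,
          show e + c - c = e from by omega,
          show ((e + c : ℕ) : ℚ) - (c : ℚ) = (e : ℚ) from by push_cast; ring]
        field_simp [q_ne_zero c]
    · refine ⟨fun _ => 0, fun k => by simp, fun n hn => ?_⟩
      rw [coeff_X_pow, if_neg (by omega)]
      simp
  · exact ⟨fun _ => 0, fun k => by simp, fun n hn => by simp⟩
  · rintro x y _ _ ⟨K1, h1, e1⟩ ⟨K2, h2, e2⟩
    refine ⟨fun k => K1 k + K2 k, fun k =>
      le_trans (Polynomial.natDegree_add_le _ _) (max_le (h1 k) (h2 k)), fun n hn => ?_⟩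
    rw [map_add, e1 n hn, e2 n hn, ← Finset.sum_add_distrib]
    refine Finset.sum_congr rfl fun k _ => ?_
    rw [Polynomial.eval_add]
    ring
  · rintro r x _ ⟨K, hK, eK⟩
    refine ⟨fun k => Polynomial.C r * K k, fun k =>
      le_trans (Polynomial.natDegree_C_mul_le _ _) (hK k), fun n hn => ?_⟩
    rw [map_smul, smul_eq_mul, eK n hn, Finset.mul_sum]
    refine Finset.sum_congr rfl fun k _ => ?_
    rw [Polynomial.eval_mul, Polynomial.eval_C]
    ring

end WSZ

open WSZ Finset PowerSeries in
theorem weighted_sum_prod_two_zeta_poly_coeff (d : ℕ) (F : MvPolynomial (Fin 2) ℚ)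
    (hF : F.totalDegree = d) :
    ∃ K : ℕ → Polynomial ℚ,
      (∀ k, (K k).natDegree ≤ d + 1) ∧
      ∀ n : ℕ, d + 2 ≤ n →
        ∑ j ∈ Finset.Icc 1 (n - 1),
            ((MvPolynomial.eval ![(j : ℚ), ((n - j : ℕ) : ℚ)] F : ℚ) : ℂ)
              * riemannZeta ((2 * j : ℕ) : ℂ) * riemannZeta ((2 * (n - j) : ℕ) : ℂ)
          = ∑ k ∈ Finset.range ((d + 1) / 2 + 1),
              (((K k).eval (n : ℚ) : ℚ) : ℂ)
                * riemannZeta ((2 * k : ℕ) : ℂ) * riemannZeta ((2 * n - 2 * k : ℕ) : ℂ) := by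
  classical
  set LF : PowerSeries ℚ :=
    ∑ m ∈ F.support, (MvPolynomial.coeff m F) • (th^[m 0] G * th^[m 1] G) with hLF
  have hmem : LF ∈ NN (d + 2) := by
    refine Submodule.sum_mem _ fun m hm => ?_
    have hdeg : m 0 + m 1 ≤ d := by
      have h1 := MvPolynomial.le_totalDegree hm
      rw [hF] at h1
      have h2 : (m.sum fun _ e => e) = m 0 + m 1 := by
        rw [Finsupp.sum_fintype _ _ (fun _ => rfl)]
        exact Fin.sum_univ_two _
      omega
    exact Submodule.smul_mem _ _ (NN_mono (by omega) (prod_mem (m 0) (m 1)))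
  obtain ⟨K, hKdeg, hKeq⟩ := extract d hmem
  refine ⟨K, hKdeg, fun n hn => ?_⟩
  have hcoeff : coeff n LF = ∑ j ∈ Icc 1 (n - 1),
      (MvPolynomial.eval ![(j : ℚ), ((n - j : ℕ) : ℚ)] F) * (q j * q (n - j)) := by
    rw [hLF, map_sum]
    have hterm : ∀ m ∈ F.support,
        coeff n ((MvPolynomial.coeff m F) • (th^[m 0] G * th^[m 1] G))
          = ∑ j ∈ Icc 1 (n - 1), MvPolynomial.coeff m F *
              ((j : ℚ) ^ (m 0) * ((n - j : ℕ) : ℚ) ^ (m 1) * (q j * q (n - j))) := by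
      intro m hm
      rw [map_smul, smul_eq_mul,
        conv_zero _ _ (by rw [coeff_th_iter]; simp) (by rw [coeff_th_iter]; simp) n (by omega),
        Finset.mul_sum]
      refine Finset.sum_congr rfl fun j hj => ?_
      rw [mem_Icc] at hj
      rw [coeff_th_iter, coeff_th_iter, coeff_G, coeff_G, if_neg (by omega), if_neg (by omega)]
      ring
    rw [Finset.sum_congr rfl hterm, Finset.sum_comm]
    refine Finset.sum_congr rfl fun j hj => ?_
    rw [MvPolynomial.eval_eq', Finset.sum_mul]
    refine Finset.sum_congr rfl fun m hm => ?_
    rw [Fin.prod_univ_two]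
    simp only [Matrix.cons_val_zero, Matrix.cons_val_one, Matrix.head_cons]
    ring
  have hrat : (∑ j ∈ Icc 1 (n - 1),
      (MvPolynomial.eval ![(j : ℚ), ((n - j : ℕ) : ℚ)] F) * (q j * q (n - j)))
      = ∑ k ∈ range ((d + 1) / 2 + 1), (K k).eval (n : ℚ) * (q k * q (n - k)) := by
    rw [← hcoeff]
    exact hKeq n hn
  have hL : ∀ j ∈ Icc 1 (n - 1),
      ((MvPolynomial.eval ![(j : ℚ), ((n - j : ℕ) : ℚ)] F : ℚ) : ℂ)
          * riemannZeta ((2 * j : ℕ) : ℂ) * riemannZeta ((2 * (n - j) : ℕ) : ℂ)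
        = (((MvPolynomial.eval ![(j : ℚ), ((n - j : ℕ) : ℚ)] F) * (q j * q (n - j)) : ℚ) : ℂ)
            * (Real.pi : ℂ) ^ (2 * n) := by
    intro j hj
    rw [mem_Icc] at hj
    rw [zeta_q (by omega), zeta_q (by omega)]
    have hp : (Real.pi : ℂ) ^ (2 * j) * (Real.pi : ℂ) ^ (2 * (n - j))
        = (Real.pi : ℂ) ^ (2 * n) := by
      rw [← pow_add]; congr 1; omega
    push_cast
    linear_combination (((MvPolynomial.eval ![(j : ℚ), ((n - j : ℕ) : ℚ)] F : ℚ) : ℂ)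
      * ((q j : ℚ) : ℂ) * ((q (n - j) : ℚ) : ℂ)) * hp
  have hR' : ∀ k ∈ range ((d + 1) / 2 + 1),
      (((K k).eval (n : ℚ) : ℚ) : ℂ)
          * riemannZeta ((2 * k : ℕ) : ℂ) * riemannZeta ((2 * n - 2 * k : ℕ) : ℂ)
        = (((K k).eval (n : ℚ) * (q k * q (n - k)) : ℚ) : ℂ) * (Real.pi : ℂ) ^ (2 * n) := by
    intro k hk
    rw [mem_range] at hk
    have hkd : k ≤ (d + 1) / 2 := by omega
    have hkn : k + 1 ≤ n := by omega
    have h2 : (2 * n - 2 * k : ℕ) = 2 * (n - k) := by omega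
    rcases Nat.eq_zero_or_pos k with rfl | hkpos
    · rw [show ((2 * 0 : ℕ) : ℂ) = 0 from by norm_num, riemannZeta_zero, h2, zeta_q (by omega),
        show (2 * (n - 0)) = 2 * n from by omega, q_zero]
      push_cast
      ring
    · rw [zeta_q (by omega), h2, zeta_q (by omega)]
      have hp : (Real.pi : ℂ) ^ (2 * k) * (Real.pi : ℂ) ^ (2 * (n - k))
          = (Real.pi : ℂ) ^ (2 * n) := by
        rw [← pow_add]; congr 1; omega
      push_cast
      linear_combination ((((K k).eval (n : ℚ) : ℚ) : ℂ)
        * ((q k : ℚ) : ℂ) * ((q (n - k) : ℚ) : ℂ)) * hp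
  rw [Finset.sum_congr rfl hL, Finset.sum_congr rfl hR', ← Finset.sum_mul, ← Finset.sum_mul,
    ← Rat.cast_sum, ← Rat.cast_sum, hrat]
end

section
/- Let r be a nonnegative integer and n an integer with n ≥ 2r + 1. Then C(2n-1, 2r+1) - 2 * ∑_{k=r+1}^{n-r-1} C(2k-1, r) * C(2n-2k-1, r) = (-1)^r * C(n-1, r) + 4 * ∑_{k=1}^{r} C(2k-1, r) * C(2n-2k-1, r), as an identity of integers. -/
open Finset

/-- Hockey stick identity. -/
lemma aux_sum_choose (r m : ℕ) :
    ∑ j ∈ range (m + 1), j.choose r = (m + 1).choose (r + 1) := by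
  induction m with
  | zero =>
      cases r with
      | zero => simp
      | succ t => simp [Nat.choose_eq_zero_of_lt (show 1 < t + 1 + 1 by omega)]
  | succ m ih =>
      rw [sum_range_succ, ih, Nat.choose_succ_succ (m + 1) r]
      simp only [Nat.succ_eq_add_one]
      omega

/-- Vandermonde-type convolution on upper indices. -/
lemma aux_f_eq (r s m : ℕ) :
    ∑ j ∈ range (m + 1), j.choose r * (m - j).choose s = (m + 1).choose (r + s + 1) := by
  induction s generalizing m with
  | zero => simpa using aux_sum_choose r m
  | succ s ihs =>
      induction m with
      | zero =>
          simp only [range_one, sum_singleton, Nat.choose_succ_succ, Nat.sub_self]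
          simp [Nat.choose_eq_zero_of_lt (show 1 < r + (s + 1) + 1 by omega),
            Nat.choose_eq_zero_of_lt (show 0 < r + (s + 1) by omega)]
      | succ m ihm =>
          rw [sum_range_succ]
          have hstep : ∑ j ∈ range (m + 1), j.choose r * ((m + 1 - j).choose (s + 1))
              = ∑ j ∈ range (m + 1),
                  (j.choose r * ((m - j).choose (s + 1)) + j.choose r * ((m - j).choose s)) := by
            apply sum_congr rfl
            intro j hj
            have hj' : j ≤ m := by simpa [Nat.lt_succ_iff] using hj
            have h1 : m + 1 - j = (m - j) + 1 := by omega
            rw [h1, Nat.choose_succ_succ, Nat.mul_add, Nat.add_comm]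
          rw [hstep, sum_add_distrib, ihm, ihs]
          have : (m + 1 + 1).choose (r + (s + 1) + 1) = (m+1).choose (r + s + 1) + (m+1).choose (r + (s+1) + 1) := by
            have := Nat.choose_succ_succ (m + 1) (r + s + 1)
            rw [show r + (s + 1) + 1 = (r + s + 1) + 1 by ring, this]
          rw [this]
          have h0 : (m + 1 - (m + 1)).choose (s + 1) = 0 := by simp
          rw [h0]
          omega

/-- Split a sum over an odd range by parity. -/
lemma aux_split_parity (h : ℕ → ℤ) (n : ℕ) :
    ∑ j ∈ range (2 * n + 1), h j
      = ∑ k ∈ range (n + 1), h (2 * k) + ∑ k ∈ range n, h (2 * k + 1) := by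
  induction n with
  | zero => simp
  | succ n ih =>
      rw [show 2 * (n + 1) + 1 = (2 * n + 1) + 1 + 1 by ring, sum_range_succ, sum_range_succ, ih,
        sum_range_succ (fun k => h (2 * k)) (n + 1), sum_range_succ (fun k => h (2 * k + 1)) n,
        show 2 * (n + 1) = 2 * n + 1 + 1 by ring]
      ring

lemma aux_g_shift2 (r s m : ℕ) :
    ∑ j ∈ range (m + 2), (-1 : ℤ) ^ j * ((j.choose r : ℤ) * ((m + 1 - j).choose (s + 1) : ℤ))
      = ∑ j ∈ range (m + 1), (-1 : ℤ) ^ j * ((j.choose r : ℤ) * ((m - j).choose (s + 1) : ℤ))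
        + ∑ j ∈ range (m + 1), (-1 : ℤ) ^ j * ((j.choose r : ℤ) * ((m - j).choose s : ℤ)) := by
  rw [sum_range_succ]
  have h0 : ((m + 1 - (m + 1)).choose (s + 1) : ℤ) = 0 := by simp
  rw [h0]
  have hstep : ∑ j ∈ range (m + 1), (-1 : ℤ) ^ j * ((j.choose r : ℤ) * ((m + 1 - j).choose (s + 1) : ℤ))
      = ∑ j ∈ range (m + 1),
          ((-1 : ℤ) ^ j * ((j.choose r : ℤ) * ((m - j).choose (s + 1) : ℤ))
            + (-1 : ℤ) ^ j * ((j.choose r : ℤ) * ((m - j).choose s : ℤ))) := by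
    apply sum_congr rfl
    intro j hj
    have hj' : j ≤ m := by simpa [Nat.lt_succ_iff] using hj
    have h1 : m + 1 - j = (m - j) + 1 := by omega
    rw [h1, Nat.choose_succ_succ]
    push_cast
    ring
  rw [hstep, sum_add_distrib]
  ring

lemma aux_g_shift1 (r s m : ℕ) :
    ∑ j ∈ range (m + 2), (-1 : ℤ) ^ j * ((j.choose (r + 1) : ℤ) * ((m + 1 - j).choose s : ℤ))
      = -∑ j ∈ range (m + 1), (-1 : ℤ) ^ j * ((j.choose (r + 1) : ℤ) * ((m - j).choose s : ℤ))
        - ∑ j ∈ range (m + 1), (-1 : ℤ) ^ j * ((j.choose r : ℤ) * ((m - j).choose s : ℤ)) := by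
  rw [sum_range_succ']
  have h0 : (-1 : ℤ) ^ 0 * (((0 : ℕ).choose (r + 1) : ℤ) * ((m + 1 - 0).choose s : ℤ)) = 0 := by
    simp
  rw [h0, add_zero]
  have hstep : ∑ j ∈ range (m + 1),
        (-1 : ℤ) ^ (j + 1) * (((j + 1).choose (r + 1) : ℤ) * ((m + 1 - (j + 1)).choose s : ℤ))
      = ∑ j ∈ range (m + 1),
          (-((-1 : ℤ) ^ j * ((j.choose (r + 1) : ℤ) * ((m - j).choose s : ℤ)))
            - (-1 : ℤ) ^ j * ((j.choose r : ℤ) * ((m - j).choose s : ℤ))) := by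
    apply sum_congr rfl
    intro j hj
    have h1 : m + 1 - (j + 1) = m - j := by omega
    rw [h1, Nat.choose_succ_succ]
    push_cast
    ring
  rw [hstep, sum_sub_distrib, sum_neg_distrib]

lemma aux_g_odd (r p : ℕ) :
    ∑ j ∈ range (2 * p + 2), (-1 : ℤ) ^ j * ((j.choose r : ℤ) * ((2 * p + 1 - j).choose r : ℤ)) = 0 := by
  have key : ∑ j ∈ range (2 * p + 2), (-1 : ℤ) ^ j * ((j.choose r : ℤ) * ((2 * p + 1 - j).choose r : ℤ))
      = -∑ j ∈ range (2 * p + 2), (-1 : ℤ) ^ j * ((j.choose r : ℤ) * ((2 * p + 1 - j).choose r : ℤ)) := by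
    nth_rewrite 1 [← Finset.sum_range_reflect]
    rw [← sum_neg_distrib]
    apply sum_congr rfl
    intro j hj
    have hj' : j ≤ 2 * p + 1 := by
      have := mem_range.mp hj; omega
    have h1 : 2 * p + 2 - 1 - j = 2 * p + 1 - j := by omega
    have h2 : 2 * p + 1 - (2 * p + 1 - j) = j := by omega
    rw [h1, h2]
    have h4 : (-1 : ℤ) ^ j * (-1 : ℤ) ^ j = 1 := by
      rw [← pow_add, ← two_mul, pow_mul]; norm_num
    have hs : (-1 : ℤ) ^ (2 * p + 1 - j) = -(-1 : ℤ) ^ j := by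
      calc (-1 : ℤ) ^ (2 * p + 1 - j)
          = (-1 : ℤ) ^ (2 * p + 1 - j) * ((-1 : ℤ) ^ j * (-1 : ℤ) ^ j) := by rw [h4, mul_one]
        _ = (-1 : ℤ) ^ ((2 * p + 1 - j) + j) * (-1 : ℤ) ^ j := by rw [pow_add]; ring
        _ = (-1 : ℤ) ^ (2 * p + 1) * (-1 : ℤ) ^ j := by rw [show 2 * p + 1 - j + j = 2 * p + 1 by omega]
        _ = -(-1 : ℤ) ^ j := by
            rw [Odd.neg_one_pow ⟨p, by omega⟩]; ring
    rw [hs]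
    ring
  linarith

lemma aux_alt_sum (p : ℕ) : ∑ j ∈ range (2 * p + 1), (-1 : ℤ) ^ j = 1 := by
  induction p with
  | zero => simp
  | succ p ih =>
      rw [show 2 * (p + 1) + 1 = (2 * p + 1) + 1 + 1 by ring, sum_range_succ, sum_range_succ, ih]
      have h1 : (-1 : ℤ) ^ (2 * p + 1) = -1 := Odd.neg_one_pow ⟨p, by omega⟩
      have h2 : (-1 : ℤ) ^ (2 * p + 1 + 1) = 1 := Even.neg_one_pow ⟨p + 1, by omega⟩
      rw [h1, h2]; ring

lemma aux_g_even (r p : ℕ) :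
    ∑ j ∈ range (2 * p + 1), (-1 : ℤ) ^ j * ((j.choose r : ℤ) * ((2 * p - j).choose r : ℤ))
      = (-1 : ℤ) ^ r * (p.choose r : ℤ) := by
  induction p generalizing r with
  | zero =>
      cases r <;> simp
  | succ p ih =>
      cases r with
      | zero =>
          simp only [Nat.choose_zero_right, Nat.cast_one, mul_one, pow_zero]
          exact aux_alt_sum (p + 1)
      | succ r =>
          have e1 : 2 * (p + 1) + 1 = (2 * p + 1) + 2 := by ring
          have e2 : 2 * (p + 1) = (2 * p + 1) + 1 := by ring
          rw [e1]
          have hgoal : ∑ j ∈ range ((2 * p + 1) + 2),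
                (-1 : ℤ) ^ j * ((j.choose (r + 1) : ℤ) * ((2 * (p + 1) - j).choose (r + 1) : ℤ))
              = ∑ j ∈ range ((2 * p + 1) + 2),
                (-1 : ℤ) ^ j * ((j.choose (r + 1) : ℤ) * (((2 * p + 1) + 1 - j).choose (r + 1) : ℤ)) := by
            apply sum_congr rfl
            intro j hj
            rw [show 2 * (p + 1) - j = (2 * p + 1) + 1 - j by omega]
          rw [hgoal, aux_g_shift2 (r + 1) r (2 * p + 1)]
          have hodd : ∑ j ∈ range ((2 * p + 1) + 1),
              (-1 : ℤ) ^ j * ((j.choose (r + 1) : ℤ) * ((2 * p + 1 - j).choose (r + 1) : ℤ)) = 0 := by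
            have := aux_g_odd (r + 1) p
            rw [show 2 * p + 2 = (2 * p + 1) + 1 by ring] at this
            exact this
          rw [hodd, zero_add]
          have hmix : ∑ j ∈ range ((2 * p + 1) + 1),
              (-1 : ℤ) ^ j * ((j.choose (r + 1) : ℤ) * ((2 * p + 1 - j).choose r : ℤ))
              = -∑ j ∈ range (2 * p + 1), (-1 : ℤ) ^ j * ((j.choose (r + 1) : ℤ) * ((2 * p - j).choose r : ℤ))
                - ∑ j ∈ range (2 * p + 1), (-1 : ℤ) ^ j * ((j.choose r : ℤ) * ((2 * p - j).choose r : ℤ)) := by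
            have := aux_g_shift1 r r (2 * p)
            rw [show 2 * p + 2 = (2 * p + 1) + 1 by ring] at this
            rw [show (2 * p + 1) + 1 = 2 * p + 2 by ring] at this
            convert this using 2
          have hupper : ∑ j ∈ range (2 * p + 1),
              (-1 : ℤ) ^ j * ((j.choose (r + 1) : ℤ) * ((2 * p - j).choose r : ℤ))
              = (-1 : ℤ) ^ r * (p.choose (r + 1) : ℤ) := by
            have hsh := aux_g_shift2 (r + 1) r (2 * p)
            have hodd2 : ∑ j ∈ range (2 * p + 2),
                (-1 : ℤ) ^ j * ((j.choose (r + 1) : ℤ) * ((2 * p + 1 - j).choose (r + 1) : ℤ)) = 0 :=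
              aux_g_odd (r + 1) p
            rw [show (2 * p) + 2 = 2 * p + 2 by ring, show (2 * p) + 1 = 2 * p + 1 by ring] at hsh
            rw [hodd2, ih (r + 1)] at hsh
            linear_combination -hsh
          rw [hmix, hupper, ih r, Nat.choose_succ_succ p r]
          push_cast
          ring

theorem phi_r_identity (r n : ℕ) (hn : 2 * r + 1 ≤ n) :
    ((2 * n - 1).choose (2 * r + 1) : ℤ)
        - 2 * ∑ k ∈ Finset.Icc (r + 1) (n - r - 1),
            ((2 * k - 1).choose r : ℤ) * ((2 * n - 2 * k - 1).choose r : ℤ)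
      = (-1 : ℤ) ^ r * ((n - 1).choose r : ℤ)
        + 4 * ∑ k ∈ Finset.Icc 1 r,
            ((2 * k - 1).choose r : ℤ) * ((2 * n - 2 * k - 1).choose r : ℤ) := by
  obtain ⟨N, rfl⟩ : ∃ N, n = N + 1 := ⟨n - 1, by omega⟩
  have hN : 2 * r ≤ N := by omega
  set h : ℕ → ℤ := fun j => (j.choose r : ℤ) * ((2 * N - j).choose r : ℤ) with hh
  -- Step A : full convolution
  have hA : ((2 * (N + 1) - 1).choose (2 * r + 1) : ℤ)
      = ∑ k ∈ range (N + 1), h (2 * k) + ∑ k ∈ range N, h (2 * k + 1) := by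
    rw [← aux_split_parity h N]
    have hf := aux_f_eq r r (2 * N)
    rw [show r + r + 1 = 2 * r + 1 by ring] at hf
    rw [show 2 * (N + 1) - 1 = 2 * N + 1 by omega, ← hf]
    push_cast
    rfl
  -- Step B : alternating convolution
  have hB : ∑ k ∈ range (N + 1), h (2 * k) - ∑ k ∈ range N, h (2 * k + 1)
      = (-1 : ℤ) ^ r * (N.choose r : ℤ) := by
    have hsplit := aux_split_parity (fun j => (-1 : ℤ) ^ j * h j) N
    rw [aux_g_even r N] at hsplit
    have he : ∑ k ∈ range (N + 1), (fun j => (-1 : ℤ) ^ j * h j) (2 * k)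
        = ∑ k ∈ range (N + 1), h (2 * k) := by
      apply sum_congr rfl
      intro k _
      simp only
      rw [pow_mul]
      norm_num
    have ho : ∑ k ∈ range N, (fun j => (-1 : ℤ) ^ j * h j) (2 * k + 1)
        = -∑ k ∈ range N, h (2 * k + 1) := by
      rw [← sum_neg_distrib]
      apply sum_congr rfl
      intro k _
      simp only
      rw [pow_succ, pow_mul]
      norm_num
    rw [he, ho] at hsplit
    linarith
  -- Step C : the odd sum equals the Icc 1 N sum appearing in the statement
  have hC : ∑ k ∈ Finset.Icc 1 N,
        ((2 * k - 1).choose r : ℤ) * ((2 * (N + 1) - 2 * k - 1).choose r : ℤ)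
      = ∑ k ∈ range N, h (2 * k + 1) := by
    rw [← Finset.Ico_add_one_right_eq_Icc, sum_Ico_eq_sum_range]
    apply sum_congr (by norm_num)
    intro i hi
    have hi' : i < N := by simpa using hi
    simp only [hh]
    rw [show 2 * (1 + i) - 1 = 2 * i + 1 by omega,
      show 2 * (N + 1) - 2 * (1 + i) - 1 = 2 * N - (2 * i + 1) by omega]
  -- Step D : split Icc 1 N into three pieces
  have hsplit3 : ∑ k ∈ Finset.Icc 1 N,
        ((2 * k - 1).choose r : ℤ) * ((2 * (N + 1) - 2 * k - 1).choose r : ℤ)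
      = ∑ k ∈ Finset.Icc 1 r,
            ((2 * k - 1).choose r : ℤ) * ((2 * (N + 1) - 2 * k - 1).choose r : ℤ)
        + ∑ k ∈ Finset.Icc (r + 1) (N - r),
            ((2 * k - 1).choose r : ℤ) * ((2 * (N + 1) - 2 * k - 1).choose r : ℤ)
        + ∑ k ∈ Finset.Icc (N - r + 1) N,
            ((2 * k - 1).choose r : ℤ) * ((2 * (N + 1) - 2 * k - 1).choose r : ℤ) := by
    have e1 : Finset.Icc 1 N = Finset.Ioc 0 N := Finset.Icc_add_one_left_eq_Ioc 0 N
    have e2 : Finset.Icc (r + 1) (N - r) = Finset.Ioc r (N - r) := Finset.Icc_add_one_left_eq_Ioc r (N - r)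
    have e3 : Finset.Icc (N - r + 1) N = Finset.Ioc (N - r) N := Finset.Icc_add_one_left_eq_Ioc (N - r) N
    have e4 : Finset.Icc 1 r = Finset.Ioc 0 r := Finset.Icc_add_one_left_eq_Ioc 0 r
    rw [e1, e2, e3, e4,
      sum_Ioc_consecutive _ (Nat.zero_le r) (show r ≤ N - r by omega),
      sum_Ioc_consecutive _ (Nat.zero_le (N - r)) (show N - r ≤ N by omega)]
  -- Step E : reflection
  have hrefl : ∑ k ∈ Finset.Icc (N - r + 1) N,
        ((2 * k - 1).choose r : ℤ) * ((2 * (N + 1) - 2 * k - 1).choose r : ℤ)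
      = ∑ k ∈ Finset.Icc 1 r,
            ((2 * k - 1).choose r : ℤ) * ((2 * (N + 1) - 2 * k - 1).choose r : ℤ) := by
    apply Finset.sum_nbij' (i := fun k => N + 1 - k) (j := fun k => N + 1 - k)
    · intro a ha
      simp only [mem_Icc] at ha ⊢
      omega
    · intro a ha
      simp only [mem_Icc] at ha ⊢
      omega
    · intro a ha
      simp only [mem_Icc] at ha
      omega
    · intro a ha
      simp only [mem_Icc] at ha
      omega
    · intro a ha
      simp only [mem_Icc] at ha
      rw [show 2 * (N + 1 - a) - 1 = 2 * (N + 1) - 2 * a - 1 by omega,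
        show 2 * (N + 1) - 2 * (N + 1 - a) - 1 = 2 * a - 1 by omega]
      ring
  -- finish
  rw [show N + 1 - 1 = N by omega, show N + 1 - r - 1 = N - r by omega]
  linear_combination hA + hB - 2 * hC + 2 * hsplit3 + 2 * hrefl
end

section
/- For all nonnegative integers r and n, one has ∑_{k=0}^{2n} (-1)^k * C(k, r) * C(2n-k, r) = (-1)^r * C(n, r), as an identity of integers. -/
open PowerSeries Finset

noncomputable def Wser (r : ℕ) : PowerSeries ℤ :=
  PowerSeries.mk (fun m => if Even m then ((r + m / 2).choose r : ℤ) else 0)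

lemma coeff_mul_one_sub_X_sq (f : PowerSeries ℤ) (m : ℕ) :
    (PowerSeries.coeff m) (f * (1 - PowerSeries.X ^ 2)) =
      (PowerSeries.coeff m) f - (if 2 ≤ m then (PowerSeries.coeff (m - 2)) f else 0) := by
  rw [mul_sub, mul_one, map_sub, PowerSeries.coeff_mul_X_pow']

lemma Wser_step (r : ℕ) :
    Wser (r + 1) * (1 - PowerSeries.X ^ 2) = Wser r := by
  ext m
  rw [coeff_mul_one_sub_X_sq]
  rcases m with _ | _ | k
  · simp [Wser]
  · simp [Wser, Nat.even_iff]
  · have h2 : 2 ≤ k + 1 + 1 := by omega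
    rw [if_pos h2]
    have hk : k + 1 + 1 - 2 = k := by omega
    rw [hk]
    simp only [Wser, PowerSeries.coeff_mk]
    have hd : (k + 1 + 1) / 2 = k / 2 + 1 := by omega
    rw [hd]
    by_cases he : Even k
    · have he' : Even (k + 1 + 1) := by rcases he with ⟨t, ht⟩; exact ⟨t + 1, by omega⟩
      rw [if_pos he', if_pos he, if_pos he']
      rw [show r + 1 + (k / 2 + 1) = (r + 1 + k / 2) + 1 from by ring,
        Nat.choose_succ_succ, show r + (k / 2 + 1) = r + 1 + k / 2 from by ring]
      push_cast
      ring
    · have he' : ¬ Even (k + 1 + 1) := by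
        intro h; exact he (by rcases h with ⟨t, ht⟩; exact ⟨t - 1, by omega⟩)
      rw [if_neg he', if_neg he, if_neg he']
      ring

lemma Wser_inv (r : ℕ) :
    Wser r * (1 - PowerSeries.X ^ 2) ^ (r + 1) = 1 := by
  induction r with
  | zero =>
    rw [pow_one]
    ext m
    rw [coeff_mul_one_sub_X_sq]
    rcases m with _ | _ | k
    · simp [Wser]
    · simp [Wser, Nat.even_iff, PowerSeries.coeff_one]
    · have h2 : 2 ≤ k + 1 + 1 := by omega
      rw [if_pos h2]
      have hk : k + 1 + 1 - 2 = k := by omega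
      rw [hk]
      simp only [Wser, PowerSeries.coeff_mk, Nat.choose_zero_right, Nat.zero_add,
        PowerSeries.coeff_one]
      have : (k + 1 + 1) ≠ 0 := by omega
      rw [if_neg this]
      by_cases he : Even k
      · have he' : Even (k + 1 + 1) := by rcases he with ⟨t, ht⟩; exact ⟨t + 1, by omega⟩
        rw [if_pos he', if_pos he]; simp
      · have he' : ¬ Even (k + 1 + 1) := by
          intro h; exact he (by rcases h with ⟨t, ht⟩; exact ⟨t - 1, by omega⟩)
        rw [if_neg he', if_neg he]; ring
  | succ d ih =>
    calc Wser (d + 1) * (1 - PowerSeries.X ^ 2) ^ (d + 1 + 1)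
        = (Wser (d + 1) * (1 - PowerSeries.X ^ 2)) * (1 - PowerSeries.X ^ 2) ^ (d + 1) := by
          ring
      _ = Wser d * (1 - PowerSeries.X ^ 2) ^ (d + 1) := by rw [Wser_step]
      _ = 1 := ih

theorem alternating_choose_sum_identity (r n : ℕ) :
    ∑ k ∈ Finset.range (2 * n + 1),
        (-1 : ℤ) ^ k * (k.choose r : ℤ) * ((2 * n - k).choose r : ℤ)
      = (-1 : ℤ) ^ r * (n.choose r : ℤ) := by
  classical
  set U : PowerSeries ℤ := PowerSeries.mk (fun k => ((r + k).choose r : ℤ)) with hUdef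
  have hU : U * (1 - PowerSeries.X) ^ (r + 1) = 1 :=
    PowerSeries.mk_add_choose_mul_one_sub_pow_eq_one ℤ r
  set G : PowerSeries ℤ := PowerSeries.X ^ r * U with hGdef
  set F : PowerSeries ℤ := PowerSeries.rescale (-1) G with hFdef
  have coeffG : ∀ m, PowerSeries.coeff m G = (m.choose r : ℤ) := by
    intro m
    rw [hGdef, PowerSeries.coeff_X_pow_mul', hUdef]
    by_cases h : r ≤ m
    · rw [if_pos h, PowerSeries.coeff_mk]
      congr 2
      omega
    · rw [if_neg h, Nat.choose_eq_zero_of_lt (by omega)]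
      simp
  have coeffF : ∀ m, PowerSeries.coeff m F = (-1) ^ m * (m.choose r : ℤ) := by
    intro m
    rw [hFdef, PowerSeries.coeff_rescale, coeffG]
  -- G * (1-X)^(r+1) = X^r
  have hG : G * (1 - PowerSeries.X) ^ (r + 1) = PowerSeries.X ^ r := by
    rw [hGdef, mul_assoc, hU, mul_one]
  -- F * (1+X)^(r+1) = (-1)^r X^r
  have hF : F * (1 + PowerSeries.X) ^ (r + 1)
      = PowerSeries.C ((-1) ^ r) * PowerSeries.X ^ r := by
    have := congrArg (PowerSeries.rescale (-1 : ℤ)) hG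
    rw [map_mul, map_pow, map_sub, map_one, PowerSeries.rescale_neg_one_X, map_pow,
      PowerSeries.rescale_neg_one_X, sub_neg_eq_add] at this
    rw [hFdef, this, neg_pow]
    rw [map_pow, map_neg, map_one]
  have hFG : (F * G) * (1 - PowerSeries.X ^ 2) ^ (r + 1)
      = PowerSeries.C ((-1) ^ r) * PowerSeries.X ^ (2 * r) := by
    have hfac : (1 - PowerSeries.X ^ 2 : PowerSeries ℤ)
        = (1 + PowerSeries.X) * (1 - PowerSeries.X) := by ring
    calc (F * G) * (1 - PowerSeries.X ^ 2) ^ (r + 1)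
        = (F * (1 + PowerSeries.X) ^ (r + 1)) * (G * (1 - PowerSeries.X) ^ (r + 1)) := by
          rw [hfac, mul_pow]; ring
      _ = (PowerSeries.C ((-1) ^ r) * PowerSeries.X ^ r) * PowerSeries.X ^ r := by
          rw [hF, hG]
      _ = PowerSeries.C ((-1) ^ r) * PowerSeries.X ^ (2 * r) := by
          rw [mul_assoc, ← pow_add]; ring_nf
  have hH : (PowerSeries.C ((-1) ^ r) * PowerSeries.X ^ (2 * r) * Wser r)
      * (1 - PowerSeries.X ^ 2) ^ (r + 1)
      = PowerSeries.C ((-1) ^ r) * PowerSeries.X ^ (2 * r) := by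
    rw [mul_assoc, Wser_inv, mul_one]
  have hne : ((1 - PowerSeries.X ^ 2 : PowerSeries ℤ)) ^ (r + 1) ≠ 0 := by
    apply pow_ne_zero
    intro h
    have := congrArg (PowerSeries.constantCoeff) h
    simp at this
  have hEq : F * G = PowerSeries.C ((-1) ^ r) * PowerSeries.X ^ (2 * r) * Wser r :=
    mul_right_cancel₀ hne (hFG.trans hH.symm)
  have hcoeff : PowerSeries.coeff (2 * n) (F * G)
      = ∑ k ∈ Finset.range (2 * n + 1),
          (-1 : ℤ) ^ k * (k.choose r : ℤ) * ((2 * n - k).choose r : ℤ) := by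
    rw [PowerSeries.coeff_mul, Finset.Nat.sum_antidiagonal_eq_sum_range_succ_mk]
    refine Finset.sum_congr rfl fun k hk => ?_
    rw [coeffF, coeffG, mul_assoc]
  rw [← hcoeff, hEq, mul_assoc, PowerSeries.coeff_C_mul,
    PowerSeries.coeff_X_pow_mul']
  by_cases h : r ≤ n
  · rw [if_pos (by omega), Wser]
    rw [PowerSeries.coeff_mk]
    have hev : Even (2 * n - 2 * r) := ⟨n - r, by omega⟩
    rw [if_pos hev]
    have : (2 * n - 2 * r) / 2 = n - r := by omega
    rw [this]
    have : r + (n - r) = n := by omega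
    rw [this]
  · rw [if_neg (by omega), Nat.choose_eq_zero_of_lt (by omega)]
    simp
end
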